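/- With the backward-inductive definitions of w^u_t and V^u_t as above (finite spaces, trilinear stage cost and transition, Bayes-updated belief, homogeneous extension), for each time t and each sub-probability belief π, the inf-sup is attained: there exist γ1* ∈ B1_t with V^u_t(π) = max_{γ2} w^u_t(π, γ1*, γ2) = min_{γ1} max_{γ2} w^u_t(π, γ1, γ2); moreover γ1* can be chosen as a measurable function of π. -/

import Mathlib

/-- Sub-probability vectors over a finite set. -/
def subProbSet (S : Type*) [Fintype S] : Set (S → ℝ) :=
  {p | (∀ s, 0 ≤ p s) ∧ ∑ s, p s ≤ 1}

/-- The stochastic prescriptions from private information `P` to actions `U`. -/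
def prescSet (P U : Type*) [Fintype U] : Set (P → U → ℝ) :=
  {γ | ∀ p, (∀ u, 0 ≤ γ p u) ∧ ∑ u, γ p u = 1}

/-- Expected stage cost `c̃(π,γ1,γ2)` (trilinear in `(π,γ1,γ2)`). -/
def stageCost {S P1 P2 U1 U2 : Type*} [Fintype S] [Fintype U1] [Fintype U2]
    (proj1 : S → P1) (proj2 : S → P2) (c : S → U1 → U2 → ℝ)
    (π : S → ℝ) (γ1 : P1 → U1 → ℝ) (γ2 : P2 → U2 → ℝ) : ℝ :=
  ∑ s, ∑ u1, ∑ u2, π s * γ1 (proj1 s) u1 * γ2 (proj2 s) u2 * c s u1 u2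

/-- Unnormalized joint measure on `(z, s')` (trilinear in `(π,γ1,γ2)`). -/
def PjD {S S' P1 P2 U1 U2 Z : Type*} [Fintype S] [Fintype U1] [Fintype U2]
    (proj1 : S → P1) (proj2 : S → P2) (K : S → U1 → U2 → Z → S' → ℝ)
    (π : S → ℝ) (γ1 : P1 → U1 → ℝ) (γ2 : P2 → U2 → ℝ) (z : Z) (s' : S') : ℝ :=
  ∑ s, ∑ u1, ∑ u2, π s * γ1 (proj1 s) u1 * γ2 (proj2 s) u2 * K s u1 u2 z s'

/-- Marginal `P^m` of `P^j` on `z`. -/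
def PmD {S S' P1 P2 U1 U2 Z : Type*} [Fintype S] [Fintype S'] [Fintype U1]
    [Fintype U2]
    (proj1 : S → P1) (proj2 : S → P2) (K : S → U1 → U2 → Z → S' → ℝ)
    (π : S → ℝ) (γ1 : P1 → U1 → ℝ) (γ2 : P2 → U2 → ℝ) (z : Z) : ℝ :=
  ∑ s', PjD proj1 proj2 K π γ1 γ2 z s'

/-- The stage objective `w^u_t` of the min-max dynamic program. -/
def wStage {S S' P1 P2 U1 U2 Z : Type*} [Fintype S] [Fintype S'] [Fintype U1]
    [Fintype U2] [Fintype Z]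
    (proj1 : S → P1) (proj2 : S → P2) (c : S → U1 → U2 → ℝ)
    (K : S → U1 → U2 → Z → S' → ℝ)
    (F : (S → ℝ) → (P1 → U1 → ℝ) → (P2 → U2 → ℝ) → Z → (S' → ℝ))
    (Vnext : (S' → ℝ) → ℝ)
    (π : S → ℝ) (γ1 : P1 → U1 → ℝ) (γ2 : P2 → U2 → ℝ) : ℝ :=
  stageCost proj1 proj2 c π γ1 γ2 +
    ∑ z, PmD proj1 proj2 K π γ1 γ2 z * Vnext (F π γ1 γ2 z)


open Set Filter Topology

theorem contOn_sSup_image {X Y : Type*} [TopologicalSpace X] [TopologicalSpace Y]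
    {D : Set X} {K : Set Y} (hK : IsCompact K) {h : X → Y → ℝ}
    (hcont : ContinuousOn (fun p : X × Y => h p.1 p.2) (D ×ˢ K)) :
    ContinuousOn (fun x => sSup (h x '' K)) D := by
  rw [continuousOn_iff_continuous_restrict]
  have : CompactSpace K := isCompact_iff_compactSpace.mp hK
  have hc : Continuous ↿(fun (x : D) (y : K) => h (x : X) (y : Y)) := by
    have hj : Continuous fun p : D × K => ((p.1 : X), (p.2 : Y)) :=
      (continuous_subtype_val.comp continuous_fst).prodMk
        (continuous_subtype_val.comp continuous_snd)
    exact hcont.comp_continuous hj fun p => ⟨p.1.2, p.2.2⟩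
  have h2 := IsCompact.continuous_sSup (K := (univ : Set K)) isCompact_univ hc
  have e : (D.domRestrict fun x => sSup (h x '' K)) =
      fun x : D => sSup ((fun y : K => h (x : X) (y : Y)) '' univ) := by
    funext x
    show sSup (h (x : X) '' K) = _
    rw [Set.image_eq_range, image_univ]
  rw [e]
  exact h2

theorem contOn_sInf_image {X Y : Type*} [TopologicalSpace X] [TopologicalSpace Y]
    {D : Set X} {K : Set Y} (hK : IsCompact K) {h : X → Y → ℝ}
    (hcont : ContinuousOn (fun p : X × Y => h p.1 p.2) (D ×ˢ K)) :
    ContinuousOn (fun x => sInf (h x '' K)) D := by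
  have hmain := contOn_sSup_image (h := fun x y => -(h x y)) hK (by exact hcont.neg)
  have e : ∀ x, sInf (h x '' K) = -sSup ((fun y => -(h x y)) '' K) := by
    intro x
    have himg : (fun y => -(h x y)) '' K = -(h x '' K) := by
      ext w
      simp only [Set.mem_image, Set.mem_neg]
      constructor
      · rintro ⟨y, hy, rfl⟩; exact ⟨y, hy, by ring⟩
      · rintro ⟨y, hy, hw⟩; exact ⟨y, hy, by linarith⟩
    rw [himg]
    rfl
  simp only [e]
  exact hmain.neg

/-- Fixing the first coordinate in a `ContinuousOn` function of a product. -/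
theorem contOn_fix_left {X Y : Type*} [TopologicalSpace X] [TopologicalSpace Y]
    {f : X × Y → ℝ} {D : Set X} {K : Set Y} (hf : ContinuousOn f (D ×ˢ K))
    {x : X} (hx : x ∈ D) : ContinuousOn (fun y => f (x, y)) K :=
  hf.comp (Continuous.prodMk_right x).continuousOn fun y hy => ⟨hx, hy⟩

theorem measurableSet_le_of_contOn {X : Type*} [TopologicalSpace X] [MeasurableSpace X]
    [OpensMeasurableSpace X] {D : Set X} (hD : MeasurableSet D) {f1 f2 : X → ℝ}
    (h1 : ContinuousOn f1 D) (h2 : ContinuousOn f2 D) :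
    MeasurableSet {x | x ∈ D ∧ f1 x ≤ f2 x} := by
  have himg : {x | x ∈ D ∧ f1 x ≤ f2 x} = Subtype.val '' {x : D | f1 ↑x ≤ f2 ↑x} := by
    ext x
    simp only [Set.mem_setOf_eq, Set.mem_image, Subtype.exists, exists_and_right,
      exists_eq_right]
    tauto
  rw [himg]
  apply (MeasurableEmbedding.subtype_coe hD).measurableSet_image.2
  have : IsClosed {x : D | f1 ↑x ≤ f2 ↑x} :=
    isClosed_le (continuousOn_iff_continuous_restrict.mp h1)
      (continuousOn_iff_continuous_restrict.mp h2)
  exact this.measurableSet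

/-- Measurable selection of a minimizer (Kuratowski–Ryll-Nardzewski style construction). -/
theorem exists_measurable_argmin
    {X Y : Type*} [TopologicalSpace X] [MeasurableSpace X] [OpensMeasurableSpace X]
    [MetricSpace Y] [SecondCountableTopology Y] [MeasurableSpace Y]
    [BorelSpace Y]
    {D : Set X} (hD : MeasurableSet D) {K : Set Y} (hK : IsCompact K) (hKne : K.Nonempty)
    {h : X → Y → ℝ} (hcont : ContinuousOn (fun p : X × Y => h p.1 p.2) (D ×ˢ K)) :
    ∃ sel : X → Y, Measurable sel ∧ ∀ x ∈ D, sel x ∈ K ∧ ∀ y ∈ K, h x (sel x) ≤ h x y := by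
  classical
  have : Nonempty K := hKne.to_subtype
  obtain ⟨u', hu'⟩ := TopologicalSpace.exists_dense_seq K
  set u : ℕ → Y := fun n => (u' n : Y) with hu_def
  have hu_mem : ∀ n, u n ∈ K := fun n => (u' n).2
  have hu_dense : ∀ a ∈ K, ∀ ε : ℝ, 0 < ε → ∃ i, dist a (u i) < ε := by
    intro a ha ε hε
    obtain ⟨i, hi⟩ := Metric.denseRange_iff.mp hu' ⟨a, ha⟩ ε hε
    exact ⟨i, by simpa [Subtype.dist_eq] using hi⟩
  set g : X → ℝ := fun x => sInf (h x '' K) with hg_def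
  have hgcont : ContinuousOn g D := contOn_sInf_image hK hcont
  have hfix : ∀ x ∈ D, ContinuousOn (h x) K := fun x hx => contOn_fix_left hcont hx
  have hbdd : ∀ x ∈ D, BddBelow (h x '' K) := fun x hx =>
    (hK.image_of_continuousOn (hfix x hx)).bddBelow
  -- the approximating sets
  set R : ℕ → ℝ → Set X := fun i q =>
    {x | x ∈ D ∧ sInf (h x '' (K ∩ Metric.closedBall (u i) q)) ≤ g x} with hR_def
  have hKq : ∀ i q, IsCompact (K ∩ Metric.closedBall (u i) q) := fun i q =>
    hK.inter_right Metric.isClosed_closedBall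
  have hRmeas : ∀ i q, MeasurableSet (R i q) := by
    intro i q
    exact measurableSet_le_of_contOn hD
      (contOn_sInf_image (hKq i q) (hcont.mono (Set.prod_mono_right (inter_subset_left)))) hgcont
  -- semantics of R
  have hR_fwd : ∀ i q, 0 ≤ q → ∀ x ∈ R i q, ∃ a ∈ K, h x a = g x ∧ dist a (u i) ≤ q := by
    intro i q hq x hxR
    obtain ⟨hxD, hle⟩ := hxR
    have hne : (K ∩ Metric.closedBall (u i) q).Nonempty :=
      ⟨u i, hu_mem i, Metric.mem_closedBall.2 (by simpa using hq)⟩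
    obtain ⟨b, hb, hbeq⟩ := (hKq i q).exists_sInf_image_eq hne
      ((hfix x hxD).mono inter_subset_left)
    refine ⟨b, hb.1, le_antisymm ?_ ?_, Metric.mem_closedBall.1 hb.2⟩
    · exact hbeq ▸ hle
    · exact csInf_le (hbdd x hxD) (mem_image_of_mem _ hb.1)
  have hR_bwd : ∀ i q x, x ∈ D → ∀ a ∈ K, h x a = g x → dist a (u i) ≤ q → x ∈ R i q := by
    intro i q x hxD a haK haeq hball
    refine ⟨hxD, ?_⟩
    calc sInf (h x '' (K ∩ Metric.closedBall (u i) q)) ≤ h x a :=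
        csInf_le ((hbdd x hxD).mono (image_mono inter_subset_left))
          (mem_image_of_mem _ ⟨haK, Metric.mem_closedBall.2 hball⟩)
      _ = g x := haeq
  -- the recursive construction
  set ε : ℕ → ℝ := fun n => (1/2 : ℝ) ^ n with hε_def
  have hεpos : ∀ n, 0 < ε n := fun n => by positivity
  set Q : ℕ → (X → Y) → ℕ → X → Prop := fun n prev i x =>
    x ∈ R i (ε (n+1)) ∧ dist (u i) (prev x) ≤ ε n + ε (n+1) with hQ_def
  have Pex : ∀ n (prev : X → Y) x, ∃ i, Q n prev i x ∨ ∀ j, ¬ Q n prev j x := by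
    intro n prev x
    by_cases hx : ∃ j, Q n prev j x
    · obtain ⟨j, hj⟩ := hx; exact ⟨j, Or.inl hj⟩
    · exact ⟨0, Or.inr (not_exists.mp hx)⟩
  have P0ex : ∀ x, ∃ i, x ∈ R i 1 ∨ ∀ j, x ∉ R j 1 := by
    intro x
    by_cases hx : ∃ j, x ∈ R j 1
    · obtain ⟨j, hj⟩ := hx; exact ⟨j, Or.inl hj⟩
    · exact ⟨0, Or.inr (not_exists.mp hx)⟩
  set c : ℕ → X → Y := fun n => Nat.rec (fun x => u (Nat.find (P0ex x)))
    (fun n prev x => u (Nat.find (Pex n prev x))) n with hc_def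
  have hc_succ : ∀ n, c (n+1) = fun x => u (Nat.find (Pex n (c n) x)) := fun n => rfl
  have hc_zero : c 0 = fun x => u (Nat.find (P0ex x)) := rfl
  -- measurability of c n
  have meas_find : ∀ {p : ℕ → X → Prop} {inst : ∀ x, DecidablePred fun n => p n x}
      (hex : ∀ x, ∃ n, p n x),
      (∀ n, MeasurableSet {x | p n x}) →
      Measurable fun x => u (@Nat.find (fun n => p n x) (inst x) (hex x)) := by
    intro p inst hex hp
    apply Measurable.comp (measurable_from_top (f := u))
    apply measurable_to_countable'
    intro i
    have : (fun x => @Nat.find (fun n => p n x) (inst x) (hex x)) ⁻¹' {i} =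
        {x | p i x} ∩ ⋂ j ∈ Finset.range i, {x | p j x}ᶜ := by
      ext x
      simp only [Set.mem_preimage, Set.mem_singleton_iff, Nat.find_eq_iff,
        Set.mem_inter_iff, Set.mem_setOf_eq, Set.mem_iInter, Set.mem_compl_iff,
        Finset.mem_range]
    rw [this]
    exact (hp i).inter (MeasurableSet.iInter fun j => MeasurableSet.iInter fun _ => (hp j).compl)
  have meas_c : ∀ n, Measurable (c n) := by
    intro n
    induction n with
    | zero =>
      have hm : ∀ i, MeasurableSet {x | x ∈ R i 1 ∨ ∀ j, x ∉ R j 1} := by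
        intro i
        refine (hRmeas i 1).union ?_
        have e : MeasurableSet (⋂ j, (R j 1)ᶜ) :=
          MeasurableSet.iInter fun j => (hRmeas j 1).compl
        convert e using 1
        refine iff_of_eq (congrArg MeasurableSet ?_)
        ext x
        exact ⟨fun hx => Set.mem_iInter.2 fun j => hx j, fun hx j => Set.mem_iInter.1 hx j⟩
      rw [hc_zero]
      exact meas_find P0ex hm
    | succ n ih =>
      have hQm : ∀ j, MeasurableSet {x | Q n (c n) j x} := by
        intro j
        exact (hRmeas j (ε (n+1))).inter
          (measurableSet_le (measurable_const.dist ih) measurable_const)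
      have hm : ∀ i, MeasurableSet {x | Q n (c n) i x ∨ ∀ j, ¬ Q n (c n) j x} := by
        intro i
        refine (hQm i).union ?_
        have e : MeasurableSet (⋂ j, {x | Q n (c n) j x}ᶜ) :=
          MeasurableSet.iInter fun j => (hQm j).compl
        convert e using 1
        refine iff_of_eq (congrArg MeasurableSet ?_)
        ext x
        exact ⟨fun hx => Set.mem_iInter.2 fun j => hx j, fun hx j => Set.mem_iInter.1 hx j⟩
      rw [hc_succ n]
      exact meas_find (Pex n (c n)) hm
  -- off `D` the construction is constant
  have hoffD : ∀ n x, x ∉ D → c n x = u 0 := by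
    intro n
    induction n with
    | zero =>
      intro x hx
      have h0 : (fun i => x ∈ R i 1 ∨ ∀ j, x ∉ R j 1) 0 := Or.inr fun j hj => hx hj.1
      rw [hc_zero]
      show u (Nat.find (P0ex x)) = u 0
      rw [(Nat.find_eq_zero (P0ex x)).2 h0]
    | succ n ih =>
      intro x hx
      have h0 : (fun i => Q n (c n) i x ∨ ∀ j, ¬ Q n (c n) j x) 0 :=
        Or.inr fun j hj => hx hj.1.1
      rw [hc_succ n]
      show u (Nat.find (Pex n (c n) x)) = u 0
      rw [(Nat.find_eq_zero (Pex n (c n) x)).2 h0]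
  -- the invariant: `c n x` is within `ε n` of a minimizer
  have INV : ∀ n, ∀ x ∈ D, ∃ a ∈ K, h x a = g x ∧ dist (c n x) a ≤ ε n := by
    intro n
    induction n with
    | zero =>
      intro x hx
      obtain ⟨a0, ha0K, ha0⟩ := hK.exists_sInf_image_eq hKne (hfix x hx)
      obtain ⟨i, hi⟩ := hu_dense a0 ha0K 1 one_pos
      have hex : ∃ j, x ∈ R j 1 :=
        ⟨i, hR_bwd i 1 x hx a0 ha0K ha0.symm (le_of_lt hi)⟩
      have hspec := Nat.find_spec (P0ex x)
      have hmem : x ∈ R (Nat.find (P0ex x)) 1 := by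
        rcases hspec with hsp | hsp
        · exact hsp
        · exact absurd hex (by simpa using fun j => hsp j)
      obtain ⟨a, haK, haeq, hdist⟩ := hR_fwd _ 1 zero_le_one x hmem
      refine ⟨a, haK, haeq, ?_⟩
      rw [hc_zero]
      show dist (u (Nat.find (P0ex x))) a ≤ ε 0
      rw [dist_comm]
      simpa [ε] using hdist
    | succ n ih =>
      intro x hx
      obtain ⟨a, haK, haeq, hdista⟩ := ih x hx
      obtain ⟨i, hi⟩ := hu_dense a haK (ε (n+1)) (hεpos (n+1))
      have hQi : Q n (c n) i x := by
        constructor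
        · exact hR_bwd i (ε (n+1)) x hx a haK haeq (le_of_lt hi)
        · calc dist (u i) (c n x) ≤ dist (u i) a + dist a (c n x) := dist_triangle _ _ _
            _ ≤ ε (n+1) + ε n := by
                rw [dist_comm (u i) a, dist_comm a (c n x)]
                exact add_le_add (le_of_lt hi) hdista
            _ = ε n + ε (n+1) := by ring
      have hspec := Nat.find_spec (Pex n (c n) x)
      have hmem : Q n (c n) (Nat.find (Pex n (c n) x)) x := by
        rcases hspec with hsp | hsp
        · exact hsp
        · exact absurd hQi (hsp i)
      obtain ⟨a', ha'K, ha'eq, hdist'⟩ := hR_fwd _ (ε (n+1)) (le_of_lt (hεpos (n+1))) x hmem.1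
      refine ⟨a', ha'K, ha'eq, ?_⟩
      rw [hc_succ n]
      show dist (u (Nat.find (Pex n (c n) x))) a' ≤ ε (n+1)
      rw [dist_comm]
      exact hdist'
  -- consecutive distances
  have hconsec : ∀ n x, dist (c (n+1) x) (c n x) ≤ ε n + ε (n+1) := by
    intro n x
    by_cases hx : x ∈ D
    · obtain ⟨a, haK, haeq, hdist⟩ := INV n x hx
      obtain ⟨i, hi⟩ := hu_dense a haK (ε (n+1)) (hεpos (n+1))
      have hQi : Q n (c n) i x := by
        constructor
        · exact hR_bwd i (ε (n+1)) x hx a haK haeq (le_of_lt hi)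
        · calc dist (u i) (c n x) ≤ dist (u i) a + dist a (c n x) := dist_triangle _ _ _
            _ ≤ ε (n+1) + ε n := by
                rw [dist_comm (u i) a, dist_comm a (c n x)]
                exact add_le_add (le_of_lt hi) hdist
            _ = ε n + ε (n+1) := by ring
      have hspec := Nat.find_spec (Pex n (c n) x)
      have hmem : Q n (c n) (Nat.find (Pex n (c n) x)) x := by
        rcases hspec with hsp | hsp
        · exact hsp
        · exact absurd hQi (hsp i)
      rw [hc_succ n]
      exact hmem.2
    · rw [hoffD (n+1) x hx, hoffD n x hx]
      simp only [dist_self]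
      positivity
  -- Cauchy and limits
  have hcauchy : ∀ x, CauchySeq fun n => c n x := by
    intro x
    apply cauchySeq_of_le_geometric (1/2 : ℝ) 2 (by norm_num)
    intro n
    rw [dist_comm]
    calc dist (c (n+1) x) (c n x) ≤ ε n + ε (n+1) := hconsec n x
      _ ≤ 2 * (1/2)^n := by
          simp only [ε, pow_succ]
          nlinarith [hεpos n]
  have hmemK : ∀ n x, c n x ∈ K := by
    intro n x
    cases n with
    | zero => rw [hc_zero]; exact hu_mem _
    | succ n => rw [hc_succ n]; exact hu_mem _
  have hlim : ∀ x, ∃ v ∈ K, Tendsto (fun n => c n x) atTop (𝓝 v) := fun x =>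
    cauchySeq_tendsto_of_isComplete hK.isComplete (fun n => hmemK n x) (hcauchy x)
  set sel : X → Y := fun x => (hlim x).choose with hsel_def
  have hselK : ∀ x, sel x ∈ K := fun x => (hlim x).choose_spec.1
  have hseltend : ∀ x, Tendsto (fun n => c n x) atTop (𝓝 (sel x)) := fun x =>
    (hlim x).choose_spec.2
  have hselmeas : Measurable sel := by
    apply measurable_of_tendsto_metrizable meas_c
    rw [tendsto_pi_nhds]
    exact hseltend
  refine ⟨sel, hselmeas, fun x hx => ⟨hselK x, ?_⟩⟩
  -- optimality
  have key : h x (sel x) = g x := by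
    choose a haK haeq hadist using fun n => INV n x hx
    have hatend : Tendsto a atTop (𝓝 (sel x)) := by
      rw [tendsto_iff_dist_tendsto_zero]
      have hb : ∀ n, dist (a n) (sel x) ≤ ε n + dist (c n x) (sel x) := by
        intro n
        calc dist (a n) (sel x) ≤ dist (a n) (c n x) + dist (c n x) (sel x) :=
            dist_triangle _ _ _
          _ ≤ ε n + dist (c n x) (sel x) :=
              add_le_add_left (by rw [dist_comm]; exact hadist n) _
      have h0 : Tendsto (fun n => ε n + dist (c n x) (sel x)) atTop (𝓝 0) := by
        have h1 : Tendsto ε atTop (𝓝 0) := by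
          simpa [ε] using tendsto_pow_atTop_nhds_zero_of_lt_one
            (by norm_num : (0:ℝ) ≤ 1/2) (by norm_num : (1/2:ℝ) < 1)
        have h2 : Tendsto (fun n => dist (c n x) (sel x)) atTop (𝓝 0) :=
          tendsto_iff_dist_tendsto_zero.mp (hseltend x)
        simpa using h1.add h2
      exact squeeze_zero (fun n => dist_nonneg) hb h0
    have hcw : Tendsto (h x) (𝓝[K] (sel x)) (𝓝 (h x (sel x))) :=
      ((hfix x hx) (sel x) (hselK x)).tendsto
    have hawithin : Tendsto a atTop (𝓝[K] (sel x)) := by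
      rw [tendsto_nhdsWithin_iff]
      exact ⟨hatend, Eventually.of_forall haK⟩
    have : Tendsto (fun n => h x (a n)) atTop (𝓝 (h x (sel x))) := hcw.comp hawithin
    have hconst : Tendsto (fun n => h x (a n)) atTop (𝓝 (g x)) := by
      simp only [haeq]
      exact tendsto_const_nhds
    exact tendsto_nhds_unique this hconst
  intro y hy
  rw [key]
  exact csInf_le (hbdd x hx) (mem_image_of_mem _ hy)

section Auxiliary

theorem subProb_isClosed (S : Type*) [Fintype S] : IsClosed (subProbSet S) := by
  have : subProbSet S = (⋂ s, {p : S → ℝ | 0 ≤ p s}) ∩ {p | ∑ s, p s ≤ 1} := by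
    ext p; simp [subProbSet, Set.mem_iInter]
  rw [this]
  exact ((isClosed_iInter fun s =>
    isClosed_le continuous_const (continuous_apply s))).inter
    (isClosed_le (continuous_finset_sum _ fun s _ => continuous_apply s) continuous_const)

theorem subProb_isCompact (S : Type*) [Fintype S] : IsCompact (subProbSet S) := by
  refine IsCompact.of_isClosed_subset (isCompact_univ_pi fun _ => (isCompact_Icc : IsCompact (Set.Icc (0:ℝ) 1)))
    (subProb_isClosed S) ?_
  intro p hp
  rw [Set.mem_univ_pi]
  intro s
  refine ⟨hp.1 s, le_trans ?_ hp.2⟩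
  exact Finset.single_le_sum (fun i _ => hp.1 i) (Finset.mem_univ s)

theorem subProb_nonempty (S : Type*) [Fintype S] : (subProbSet S).Nonempty :=
  ⟨0, fun _ => le_refl 0, by simp⟩

theorem presc_isClosed (P U : Type*) [Fintype U] : IsClosed (prescSet P U) := by
  have : prescSet P U =
      (⋂ p, ⋂ u, {γ : P → U → ℝ | 0 ≤ γ p u}) ∩ ⋂ p, {γ | ∑ u, γ p u = 1} := by
    ext γ; simp [prescSet, Set.mem_iInter, forall_and]
  rw [this]
  refine IsClosed.inter (isClosed_iInter fun p => isClosed_iInter fun u =>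
    isClosed_le continuous_const ((continuous_apply u).comp (continuous_apply p))) ?_
  exact isClosed_iInter fun p => isClosed_eq
    (continuous_finset_sum _ fun u _ => (continuous_apply u).comp (continuous_apply p))
    continuous_const

theorem presc_isCompact (P U : Type*) [Fintype P] [Fintype U] :
    IsCompact (prescSet P U) := by
  refine IsCompact.of_isClosed_subset
    (isCompact_univ_pi fun _ => isCompact_univ_pi fun _ =>
      (isCompact_Icc : IsCompact (Set.Icc (0:ℝ) 1)))
    (presc_isClosed P U) ?_
  intro γ hγ
  rw [Set.mem_univ_pi]
  intro p
  rw [Set.mem_univ_pi]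
  intro u
  refine ⟨(hγ p).1 u, ?_⟩
  calc γ p u ≤ ∑ v, γ p v :=
        Finset.single_le_sum (fun v _ => (hγ p).1 v) (Finset.mem_univ u)
    _ = 1 := (hγ p).2

theorem presc_nonempty (P U : Type*) [Fintype U] [Nonempty U] :
    (prescSet P U).Nonempty := by
  refine ⟨fun _ _ => (Fintype.card U : ℝ)⁻¹, fun p => ⟨fun u => by positivity, ?_⟩⟩
  rw [Finset.sum_const]
  simp only [Finset.card_univ, nsmul_eq_mul]
  rw [mul_inv_cancel₀]
  exact_mod_cast Fintype.card_ne_zero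

/-- Continuity of the "perspective" of a function continuous on the sub-probability set. -/
theorem phi_contOn {S' : Type*} [Fintype S'] {V' : (S' → ℝ) → ℝ}
    (hV' : ContinuousOn V' (subProbSet S')) :
    ContinuousOn (fun μ : S' → ℝ => (∑ s', μ s') * V' ((∑ s', μ s')⁻¹ • μ))
      {μ : S' → ℝ | ∀ s', 0 ≤ μ s'} := by
  obtain ⟨M, hM⟩ := (subProb_isCompact S').exists_bound_of_continuousOn hV'
  set C : Set (S' → ℝ) := {μ | ∀ s', 0 ≤ μ s'} with hC
  have hsum_c : Continuous fun μ : S' → ℝ => ∑ s', μ s' :=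
    continuous_finset_sum _ fun s _ => continuous_apply s
  have hmem : ∀ μ ∈ C, ((∑ s', μ s')⁻¹ • μ) ∈ subProbSet S' := by
    intro μ hμ
    have hs0 : 0 ≤ ∑ s', μ s' := Finset.sum_nonneg fun s _ => hμ s
    constructor
    · intro s
      exact mul_nonneg (inv_nonneg.2 hs0) (hμ s)
    · have e : ∑ s', ((∑ t', μ t')⁻¹ • μ) s' = (∑ t', μ t')⁻¹ * ∑ s', μ s' := by
        simp [Finset.mul_sum]
      rw [e]
      rcases eq_or_lt_of_le hs0 with h0 | h0
      · rw [← h0]; simp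
      · rw [inv_mul_cancel₀ (ne_of_gt h0)]
  intro μ₀ hμ₀
  by_cases h0 : ∑ s', μ₀ s' = 0
  · -- squeeze to zero
    have hval : (∑ s', μ₀ s') * V' ((∑ s', μ₀ s')⁻¹ • μ₀) = 0 := by rw [h0]; ring
    rw [ContinuousWithinAt, hval]
    have hMnn : 0 ≤ M := le_trans (norm_nonneg (V' 0)) (hM 0 ⟨fun _ => le_refl 0, by simp⟩)
    have hb : ∀ μ ∈ C, ‖(∑ s', μ s') * V' ((∑ s', μ s')⁻¹ • μ)‖ ≤ M * ∑ s', μ s' := by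
      intro μ hμ
      have hs0 : 0 ≤ ∑ s', μ s' := Finset.sum_nonneg fun s _ => hμ s
      calc ‖(∑ s', μ s') * V' ((∑ s', μ s')⁻¹ • μ)‖
          = (∑ s', μ s') * ‖V' ((∑ s', μ s')⁻¹ • μ)‖ := by
            rw [norm_mul, Real.norm_eq_abs (∑ s', μ s'), abs_of_nonneg hs0]
        _ ≤ (∑ s', μ s') * M := mul_le_mul_of_nonneg_left (hM _ (hmem μ hμ)) hs0
        _ = M * ∑ s', μ s' := mul_comm _ _
    have hlim : Tendsto (fun μ : S' → ℝ => M * ∑ s', μ s') (𝓝[C] μ₀) (𝓝 0) := by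
      have h1 : Tendsto (fun μ : S' → ℝ => M * ∑ s', μ s') (𝓝 μ₀)
          (𝓝 (M * ∑ s', μ₀ s')) := (continuous_const.mul hsum_c).tendsto μ₀
      rw [h0, mul_zero] at h1
      exact h1.mono_left nhdsWithin_le_nhds
    exact squeeze_zero_norm' (eventually_nhdsWithin_of_forall hb) hlim
  · have hpos : 0 < ∑ s', μ₀ s' :=
      lt_of_le_of_ne (Finset.sum_nonneg fun s _ => hμ₀ s) (Ne.symm h0)
    have hn : ContinuousAt (fun μ : S' → ℝ => (∑ s', μ s')⁻¹ • μ) μ₀ :=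
      (hsum_c.continuousAt.inv₀ h0).smul continuousAt_id
    have hmaps : Set.MapsTo (fun μ : S' → ℝ => (∑ s', μ s')⁻¹ • μ) C (subProbSet S') :=
      fun μ hμ => hmem μ hμ
    exact (hsum_c.continuousAt.continuousWithinAt).mul
      (ContinuousWithinAt.comp (g := V') (f := fun μ : S' → ℝ => (∑ s', μ s')⁻¹ • μ)
        (hV' _ (hmem μ₀ hμ₀)) hn.continuousWithinAt hmaps)

end Auxiliary

theorem iInf_subtype_eq_sInf_image {A : Type*} (f : A → ℝ) (s : Set A) :
    (⨅ x : s, f ↑x) = sInf (f '' s) := by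
  rw [Set.image_eq_range]; rfl

theorem iSup_subtype_eq_sSup_image {A : Type*} (f : A → ℝ) (s : Set A) :
    (⨆ x : s, f ↑x) = sSup (f '' s) := by
  rw [Set.image_eq_range]; rfl

/-- Joint continuity of the stage objective on the relevant domain. -/
theorem wStage_contOn {S S' P1 P2 U1 U2 Z : Type*} [Fintype S] [Fintype S'] [Fintype U1]
    [Fintype U2] [Fintype Z]
    (proj1 : S → P1) (proj2 : S → P2) (c : S → U1 → U2 → ℝ)
    (K : S → U1 → U2 → Z → S' → ℝ) (hKnn : ∀ s u1 u2 z s', 0 ≤ K s u1 u2 z s')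
    (F : (S → ℝ) → (P1 → U1 → ℝ) → (P2 → U2 → ℝ) → Z → (S' → ℝ))
    (hFbayes : ∀ π γ1 γ2 z, 0 < PmD proj1 proj2 K π γ1 γ2 z →
      F π γ1 γ2 z = (PmD proj1 proj2 K π γ1 γ2 z)⁻¹ • fun s' => PjD proj1 proj2 K π γ1 γ2 z s')
    {V' : (S' → ℝ) → ℝ} (hV' : ContinuousOn V' (subProbSet S')) :
    ContinuousOn
      (fun p : ((S → ℝ) × (P1 → U1 → ℝ)) × (P2 → U2 → ℝ) =>
        wStage proj1 proj2 c K F V' p.1.1 p.1.2 p.2)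
      ((subProbSet S ×ˢ prescSet P1 U1) ×ˢ prescSet P2 U2) := by
  set X := ((S → ℝ) × (P1 → U1 → ℝ)) × (P2 → U2 → ℝ)
  have hcoord : ∀ (s : S) (u1 : U1) (u2 : U2),
      Continuous fun p : X => p.1.1 s * p.1.2 (proj1 s) u1 * p.2 (proj2 s) u2 := by
    intro s u1 u2
    exact (((continuous_apply s).comp (continuous_fst.comp continuous_fst)).mul
      ((continuous_apply u1).comp ((continuous_apply (proj1 s)).comp
        (continuous_snd.comp continuous_fst)))).mul
      ((continuous_apply u2).comp ((continuous_apply (proj2 s)).comp continuous_snd))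
  have hstage : Continuous fun p : X => stageCost proj1 proj2 c p.1.1 p.1.2 p.2 := by
    simp only [stageCost]
    exact continuous_finset_sum _ fun s _ => continuous_finset_sum _ fun u1 _ =>
      continuous_finset_sum _ fun u2 _ => (hcoord s u1 u2).mul continuous_const
  have hPjc : ∀ z : Z, Continuous fun p : X =>
      (fun s' => PjD proj1 proj2 K p.1.1 p.1.2 p.2 z s') := by
    intro z
    apply continuous_pi
    intro s'
    simp only [PjD]
    exact continuous_finset_sum _ fun s _ => continuous_finset_sum _ fun u1 _ =>
      continuous_finset_sum _ fun u2 _ => (hcoord s u1 u2).mul continuous_const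
  have hPjnn : ∀ p : X, p ∈ (subProbSet S ×ˢ prescSet P1 U1) ×ˢ prescSet P2 U2 →
      ∀ z s', 0 ≤ PjD proj1 proj2 K p.1.1 p.1.2 p.2 z s' := by
    rintro ⟨⟨π, γ1⟩, γ2⟩ ⟨⟨hπ, hγ1⟩, hγ2⟩ z s'
    refine Finset.sum_nonneg fun s _ => Finset.sum_nonneg fun u1 _ =>
      Finset.sum_nonneg fun u2 _ => ?_
    exact mul_nonneg (mul_nonneg (mul_nonneg (hπ.1 s) ((hγ1 _).1 u1)) ((hγ2 _).1 u2))
      (hKnn s u1 u2 z s')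
  set φ : (S' → ℝ) → ℝ := fun μ => (∑ s', μ s') * V' ((∑ s', μ s')⁻¹ • μ) with hφ
  have hgood : ContinuousOn
      (fun p : X => stageCost proj1 proj2 c p.1.1 p.1.2 p.2 +
        ∑ z, φ (fun s' => PjD proj1 proj2 K p.1.1 p.1.2 p.2 z s'))
      ((subProbSet S ×ˢ prescSet P1 U1) ×ˢ prescSet P2 U2) := by
    refine hstage.continuousOn.add ?_
    refine continuousOn_finset_sum _ fun z _ => ?_
    refine ContinuousOn.comp (phi_contOn hV') (hPjc z).continuousOn ?_
    intro p hp
    exact fun s' => hPjnn p hp z s'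
  refine ContinuousOn.congr hgood ?_
  rintro ⟨⟨π, γ1⟩, γ2⟩ hp
  simp only [wStage]
  congr 1
  apply Finset.sum_congr rfl
  intro z _
  have hm : PmD proj1 proj2 K π γ1 γ2 z = ∑ s', PjD proj1 proj2 K π γ1 γ2 z s' := rfl
  have hmnn : 0 ≤ PmD proj1 proj2 K π γ1 γ2 z :=
    Finset.sum_nonneg fun s' _ => hPjnn _ hp z s'
  rcases eq_or_lt_of_le hmnn with h0 | h0
  · rw [hφ]
    simp only
    rw [← hm, ← h0]
    ring
  · rw [hφ]
    simp only
    rw [← hm, hFbayes π γ1 γ2 z h0]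

/-- Attainment and measurable selection in the min-max dynamic program: at each
time `t ≤ T` there is a measurable map `sel` from beliefs to prescriptions of
player 1 such that for every sub-probability belief `π`, `sel π` is a valid
prescription attaining the inf-sup, i.e.
`V_t(π) = sup_{γ2} w^u_t(π, sel π, γ2) = inf_{γ1} sup_{γ2} w^u_t(π, γ1, γ2)`,
and the inner sup is attained as a max. -/
theorem stmt_10
    (T : ℕ) (S P1 P2 U1 U2 Z : ℕ → Type)
    [∀ t, Fintype (S t)] [∀ t, Fintype (P1 t)] [∀ t, Fintype (P2 t)]
    [∀ t, Fintype (U1 t)] [∀ t, Fintype (U2 t)] [∀ t, Fintype (Z t)]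
    [∀ t, Nonempty (U1 t)] [∀ t, Nonempty (U2 t)]
    (proj1 : ∀ t, S t → P1 t) (proj2 : ∀ t, S t → P2 t)
    (c : ∀ t, S t → U1 t → U2 t → ℝ)
    (K : ∀ t, S t → U1 t → U2 t → Z t → S (t + 1) → ℝ)
    (hK : ∀ t s u1 u2 z s', 0 ≤ K t s u1 u2 z s')
    (hKsum : ∀ t s u1 u2, ∑ z, ∑ s', K t s u1 u2 z s' = 1)
    (F : ∀ t, (S t → ℝ) → (P1 t → U1 t → ℝ) → (P2 t → U2 t → ℝ) → Z t →
      (S (t + 1) → ℝ))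
    (hFsub : ∀ t π γ1 γ2 z, F t π γ1 γ2 z ∈ subProbSet (S (t + 1)))
    (hFzero : ∀ t γ1 γ2 z, F t 0 γ1 γ2 z = 0)
    (hFbayes : ∀ t π γ1 γ2 z,
      0 < PmD (proj1 t) (proj2 t) (K t) π γ1 γ2 z →
      F t π γ1 γ2 z =
        (PmD (proj1 t) (proj2 t) (K t) π γ1 γ2 z)⁻¹ •
          fun s' => PjD (proj1 t) (proj2 t) (K t) π γ1 γ2 z s')
    (V : ∀ t, (S t → ℝ) → ℝ)
    (hVT : ∀ μ, V (T + 1) μ = 0)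
    (hV : ∀ t ≤ T, ∀ π ∈ subProbSet (S t),
      V t π =
        ⨅ γ1 : prescSet (P1 t) (U1 t), ⨆ γ2 : prescSet (P2 t) (U2 t),
          wStage (proj1 t) (proj2 t) (c t) (K t) (F t) (V (t + 1)) π γ1 γ2) :
    ∀ t ≤ T,
      ∃ sel : (S t → ℝ) → (P1 t → U1 t → ℝ),
        Measurable sel ∧
        ∀ π ∈ subProbSet (S t),
          sel π ∈ prescSet (P1 t) (U1 t) ∧
          V t π =
            (⨆ γ2 : prescSet (P2 t) (U2 t),
              wStage (proj1 t) (proj2 t) (c t) (K t) (F t) (V (t + 1)) π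
                (sel π) γ2) ∧
          ∃ γ2s ∈ prescSet (P2 t) (U2 t),
            (⨆ γ2 : prescSet (P2 t) (U2 t),
              wStage (proj1 t) (proj2 t) (c t) (K t) (F t) (V (t + 1)) π
                (sel π) γ2) =
            wStage (proj1 t) (proj2 t) (c t) (K t) (F t) (V (t + 1)) π
              (sel π) γ2s := by
  classical
  -- continuity of the value functions on the sub-probability sets
  have contV : ∀ d t', t' + d = T + 1 → ContinuousOn (V t') (subProbSet (S t')) := by
    intro d
    induction d with
    | zero =>
      intro t' hsum
      have he : t' = T + 1 := by omega
      subst he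
      exact continuousOn_const.congr fun π _ => hVT π
    | succ d ih =>
      intro t' hsum
      have ht' : t' ≤ T := by omega
      have ihc : ContinuousOn (V (t' + 1)) (subProbSet (S (t' + 1))) := ih (t' + 1) (by omega)
      have hW := wStage_contOn (proj1 t') (proj2 t') (c t') (K t') (hK t') (F t')
        (hFbayes t') ihc
      have hH : ContinuousOn
          (fun q : (S t' → ℝ) × (P1 t' → U1 t' → ℝ) =>
            sSup ((fun γ2 => wStage (proj1 t') (proj2 t') (c t') (K t') (F t') (V (t' + 1))
              q.1 q.2 γ2) '' prescSet (P2 t') (U2 t')))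
          (subProbSet (S t') ×ˢ prescSet (P1 t') (U1 t')) :=
        contOn_sSup_image (presc_isCompact _ _) hW
      have hHin : ContinuousOn
          (fun π : S t' → ℝ =>
            sInf ((fun γ1 => sSup ((fun γ2 => wStage (proj1 t') (proj2 t') (c t') (K t') (F t')
              (V (t' + 1)) π γ1 γ2) '' prescSet (P2 t') (U2 t'))) '' prescSet (P1 t') (U1 t')))
          (subProbSet (S t')) :=
        contOn_sInf_image (presc_isCompact _ _) hH
      refine ContinuousOn.congr hHin ?_
      intro π hπ
      rw [hV t' ht' π hπ]
      rw [iInf_subtype_eq_sInf_image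
        (fun γ1 => ⨆ γ2 : prescSet (P2 t') (U2 t'),
          wStage (proj1 t') (proj2 t') (c t') (K t') (F t') (V (t' + 1)) π γ1 ↑γ2)
        (prescSet (P1 t') (U1 t'))]
      have einner : (fun γ1 => ⨆ γ2 : prescSet (P2 t') (U2 t'),
          wStage (proj1 t') (proj2 t') (c t') (K t') (F t') (V (t' + 1)) π γ1 ↑γ2) =
          fun γ1 => sSup ((fun γ2 => wStage (proj1 t') (proj2 t') (c t') (K t') (F t')
            (V (t' + 1)) π γ1 γ2) '' prescSet (P2 t') (U2 t')) :=
        funext fun γ1 => iSup_subtype_eq_sSup_image _ _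
      rw [einner]
  -- the main construction at a fixed time t
  intro t ht
  have contVt1 : ContinuousOn (V (t + 1)) (subProbSet (S (t + 1))) :=
    contV (T - t) (t + 1) (by omega)
  have hW := wStage_contOn (proj1 t) (proj2 t) (c t) (K t) (hK t) (F t) (hFbayes t) contVt1
  set W := wStage (proj1 t) (proj2 t) (c t) (K t) (F t) (V (t + 1)) with hWdef
  set hfun : ((S t → ℝ) × (P1 t → U1 t → ℝ)) → ℝ :=
    fun q => sSup ((fun γ2 => W q.1 q.2 γ2) '' prescSet (P2 t) (U2 t)) with hhfun
  have hHcont : ContinuousOn hfun (subProbSet (S t) ×ˢ prescSet (P1 t) (U1 t)) :=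
    contOn_sSup_image (presc_isCompact _ _) hW
  obtain ⟨sel, hselmeas, hsel⟩ := exists_measurable_argmin
    (D := subProbSet (S t)) ((subProb_isClosed (S t)).measurableSet)
    (presc_isCompact (P1 t) (U1 t)) (presc_nonempty _ _)
    (h := fun π γ1 => hfun (π, γ1)) hHcont
  refine ⟨sel, hselmeas, ?_⟩
  intro π hπ
  obtain ⟨hselK, hmin⟩ := hsel π hπ
  have hsup_eq : (⨆ γ2 : prescSet (P2 t) (U2 t), W π (sel π) ↑γ2) = hfun (π, sel π) :=
    iSup_subtype_eq_sSup_image _ _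
  have hV_eq : V t π = hfun (π, sel π) := by
    have h1 : V t π = sInf ((fun γ1 => hfun (π, γ1)) '' prescSet (P1 t) (U1 t)) := by
      rw [hV t ht π hπ]
      rw [iInf_subtype_eq_sInf_image
        (fun γ1 => ⨆ γ2 : prescSet (P2 t) (U2 t), W π γ1 ↑γ2) (prescSet (P1 t) (U1 t))]
      have einner : (fun γ1 => ⨆ γ2 : prescSet (P2 t) (U2 t), W π γ1 ↑γ2) =
          fun γ1 => hfun (π, γ1) := funext fun γ1 => iSup_subtype_eq_sSup_image _ _
      rw [einner]
    have hbb : BddBelow ((fun γ1 => hfun (π, γ1)) '' prescSet (P1 t) (U1 t)) :=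
      ((presc_isCompact _ _).image_of_continuousOn
        (contOn_fix_left hHcont hπ)).bddBelow
    rw [h1]
    apply le_antisymm
    · exact csInf_le hbb (Set.mem_image_of_mem _ hselK)
    · refine le_csInf ((presc_nonempty _ _).image _) ?_
      rintro b ⟨γ1, hγ1, rfl⟩
      exact hmin γ1 hγ1
  refine ⟨hselK, ?_, ?_⟩
  · rw [hsup_eq]
    exact hV_eq
  · obtain ⟨γ2s, hγ2s, heq⟩ := (presc_isCompact (P2 t) (U2 t)).exists_sSup_image_eq
      (presc_nonempty _ _) (contOn_fix_left hW (Set.mk_mem_prod hπ hselK))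
    exact ⟨γ2s, hγ2s, by rw [hsup_eq]; exact heq⟩
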